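/- Let n, k, r be integers with k, r ≥ 2 and n ≥ k + r − 1. If H is a vertex-k-maximal r-uniform hypergraph on n vertices, then κ̄(H) = κ(H) = k. -/

import Mathlib

/-- A finite hypergraph: a finite vertex set together with a finite set of
non-empty edges, each a subset of the vertex set. -/
structure FinHypergraph where
  verts : Finset ℕ
  edges : Finset (Finset ℕ)
  edge_sub : ∀ e ∈ edges, e ⊆ verts
  edge_nonempty : ∀ e ∈ edges, e.Nonempty

namespace FinHypergraph

/-- `H` is `r`-uniform if every edge has cardinality `r`. -/
def IsUniform (H : FinHypergraph) (r : ℕ) : Prop := ∀ e ∈ H.edges, e.card = r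

/-- `H'` is a subhypergraph of `H`. -/
def IsSub (H' H : FinHypergraph) : Prop := H'.verts ⊆ H.verts ∧ H'.edges ⊆ H.edges

/-- Two vertices are adjacent if some edge contains both. -/
def Adj (H : FinHypergraph) (u v : ℕ) : Prop := ∃ e ∈ H.edges, u ∈ e ∧ v ∈ e

/-- `H` is connected if every pair of vertices is joined by a path
(equivalently, a walk, i.e. is reachable via the adjacency relation). -/
def Connected (H : FinHypergraph) : Prop :=
  ∀ u ∈ H.verts, ∀ v ∈ H.verts, Relation.ReflTransGen H.Adj u v

/-- The subhypergraph of `H` induced by the vertex set `Y`. -/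
def induce (H : FinHypergraph) (Y : Finset ℕ) : FinHypergraph where
  verts := H.verts ∩ Y
  edges := H.edges.filter (fun e => e ⊆ Y)
  edge_sub := by
    intro e he
    simp only [Finset.mem_filter] at he
    exact Finset.subset_inter (H.edge_sub e he.1) he.2
  edge_nonempty := by
    intro e he
    simp only [Finset.mem_filter] at he
    exact H.edge_nonempty e he.1

/-- `X` is a vertex-cut of `H` if deleting `X` leaves a disconnected hypergraph. -/
def IsVertexCut (H : FinHypergraph) (X : Finset ℕ) : Prop :=
  X ⊆ H.verts ∧ ¬ (H.induce (H.verts \ X)).Connected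

open Classical in
/-- The vertex-connectivity of `H`: the minimum cardinality of a vertex-cut if one
exists, and `|V(H)| - 1` otherwise. -/
noncomputable def kappa (H : FinHypergraph) : ℕ :=
  if ∃ X, H.IsVertexCut X then sInf {m | ∃ X, H.IsVertexCut X ∧ X.card = m}
  else H.verts.card - 1

/-- `κ̄(H)`: the maximum vertex-connectivity over all subhypergraphs of `H`. -/
noncomputable def kappaBar (H : FinHypergraph) : ℕ :=
  sSup {m | ∃ H' : FinHypergraph, H'.IsSub H ∧ H'.kappa = m}

/-- `H + e`: add the edge `e` (a non-empty subset of the vertices) to `H`. -/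
def addEdge (H : FinHypergraph) (e : Finset ℕ) : FinHypergraph where
  verts := H.verts
  edges := if e ⊆ H.verts ∧ e.Nonempty then insert e H.edges else H.edges
  edge_sub := by
    intro f hf
    split at hf
    · rcases Finset.mem_insert.mp hf with rfl | hf
      · exact (by assumption : f ⊆ H.verts ∧ f.Nonempty).1
      · exact H.edge_sub f hf
    · exact H.edge_sub f hf
  edge_nonempty := by
    intro f hf
    split at hf
    · rcases Finset.mem_insert.mp hf with rfl | hf
      · exact (by assumption : f ⊆ H.verts ∧ f.Nonempty).2
      · exact H.edge_nonempty f hf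
    · exact H.edge_nonempty f hf

/-- `H + F`: add a set `F` of edges to `H`. -/
def addEdges (H : FinHypergraph) (F : Finset (Finset ℕ)) : FinHypergraph where
  verts := H.verts
  edges := H.edges ∪ F.filter (fun e => e ⊆ H.verts ∧ e.Nonempty)
  edge_sub := by
    intro f hf
    rcases Finset.mem_union.mp hf with hf | hf
    · exact H.edge_sub f hf
    · exact (Finset.mem_filter.mp hf).2.1
  edge_nonempty := by
    intro f hf
    rcases Finset.mem_union.mp hf with hf | hf
    · exact H.edge_nonempty f hf
    · exact (Finset.mem_filter.mp hf).2.2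

/-- `H` is vertex-`k`-maximal (as an `r`-uniform hypergraph): `κ̄(H) ≤ k`, but adding
any edge of the complement `H^c` creates a subhypergraph of connectivity at least `k + 1`. -/
def VertexKMaximal (H : FinHypergraph) (r k : ℕ) : Prop :=
  H.IsUniform r ∧ H.kappaBar ≤ k ∧
    ∀ e : Finset ℕ, e ⊆ H.verts → e.card = r → e ∉ H.edges →
      k + 1 ≤ (H.addEdge e).kappaBar

/-- The complete `r`-uniform hypergraph on the vertex set `V`. -/
def completeHG (V : Finset ℕ) (r : ℕ) : FinHypergraph where
  verts := V
  edges := (V.powersetCard r).filter (fun e => e.Nonempty)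
  edge_sub := by
    intro e he
    simp only [Finset.mem_filter, Finset.mem_powersetCard] at he
    exact he.1.1
  edge_nonempty := by
    intro e he
    exact (Finset.mem_filter.mp he).2

/-- The hypergraph on vertex set `V` with no edges. -/
def emptyHG (V : Finset ℕ) : FinHypergraph where
  verts := V
  edges := ∅
  edge_sub := by simp
  edge_nonempty := by simp

/-- The `r`-join `H₁ ∨_r H₂`: the union of `H₁` and `H₂` together with all
`r`-element subsets of `V(H₁) ∪ V(H₂)` meeting both `V(H₁)` and `V(H₂)`. -/
def rJoin (H1 H2 : FinHypergraph) (r : ℕ) : FinHypergraph where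
  verts := H1.verts ∪ H2.verts
  edges := H1.edges ∪ H2.edges ∪
    ((H1.verts ∪ H2.verts).powersetCard r).filter
      (fun e => (e ∩ H1.verts).Nonempty ∧ (e ∩ H2.verts).Nonempty)
  edge_sub := by
    intro e he
    rcases Finset.mem_union.mp he with he | he
    · rcases Finset.mem_union.mp he with he | he
      · exact (H1.edge_sub e he).trans Finset.subset_union_left
      · exact (H2.edge_sub e he).trans Finset.subset_union_right
    · exact (Finset.mem_powersetCard.mp (Finset.mem_filter.mp he).1).1
  edge_nonempty := by
    intro e he
    rcases Finset.mem_union.mp he with he | he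
    · rcases Finset.mem_union.mp he with he | he
      · exact H1.edge_nonempty e he
      · exact H2.edge_nonempty e he
    · obtain ⟨x, hx⟩ := (Finset.mem_filter.mp he).2.1
      exact ⟨x, (Finset.mem_inter.mp hx).1⟩

/-- The union of two hypergraphs. -/
def hUnion (H1 H2 : FinHypergraph) : FinHypergraph where
  verts := H1.verts ∪ H2.verts
  edges := H1.edges ∪ H2.edges
  edge_sub := by
    intro e he
    rcases Finset.mem_union.mp he with he | he
    · exact (H1.edge_sub e he).trans Finset.subset_union_left
    · exact (H2.edge_sub e he).trans Finset.subset_union_right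
  edge_nonempty := by
    intro e he
    rcases Finset.mem_union.mp he with he | he
    · exact H1.edge_nonempty e he
    · exact H2.edge_nonempty e he

/-- The union of the hypergraphs `f 0, …, f (m-1)`. -/
def unionOver (m : ℕ) (f : ℕ → FinHypergraph) : FinHypergraph where
  verts := (Finset.range m).biUnion (fun i => (f i).verts)
  edges := (Finset.range m).biUnion (fun i => (f i).edges)
  edge_sub := by
    intro e he
    obtain ⟨i, hi, hei⟩ := Finset.mem_biUnion.mp he
    exact ((f i).edge_sub e hei).trans (Finset.subset_biUnion_of_mem (fun i => (f i).verts) hi)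
  edge_nonempty := by
    intro e he
    obtain ⟨i, _, hei⟩ := Finset.mem_biUnion.mp he
    exact (f i).edge_nonempty e hei

/-- `C` is a component of `G`: a maximal connected subhypergraph. -/
def IsComponent (G C : FinHypergraph) : Prop :=
  C.IsSub G ∧ C.Connected ∧
    ∀ C' : FinHypergraph, C'.IsSub G → C'.Connected → C.IsSub C' → C' = C

/-- `(S, H₁, H₂)` is a separation triple of `H`: `S` is a minimum vertex-cut,
`H₁ = H[S ∪ V(C₁)]` and `H₂ = H[S ∪ V(C₂)]`, where `C₁` is a component of `H - S`
and `C₂ = H - (S ∪ V(C₁))`. -/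
def IsSeparationTriple (H : FinHypergraph) (S : Finset ℕ) (H1 H2 : FinHypergraph) : Prop :=
  H.IsVertexCut S ∧ (∀ X : Finset ℕ, H.IsVertexCut X → S.card ≤ X.card) ∧
    ∃ C1 : FinHypergraph, IsComponent (H.induce (H.verts \ S)) C1 ∧
      H1 = H.induce (S ∪ C1.verts) ∧
      H2 = H.induce (S ∪ (H.verts \ (S ∪ C1.verts)))

end FinHypergraph

namespace FinHypergraph

lemma reach_pred (G : FinHypergraph) (P : ℕ → Prop)
    (h : ∀ f ∈ G.edges, ∀ x ∈ f, ∀ y ∈ f, P x → P y) :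
    ∀ {x y : ℕ}, Relation.ReflTransGen G.Adj x y → P x → P y := by
  intro x y hxy hx
  induction hxy with
  | refl => exact hx
  | tail _ hadj ih =>
    obtain ⟨f, hf, hxf, hyf⟩ := hadj
    exact h f hf _ hxf _ hyf ih

lemma cut_two_le {G : FinHypergraph} {X : Finset ℕ} (h : G.IsVertexCut X) :
    X.card + 2 ≤ G.verts.card := by
  obtain ⟨hXV, hnc⟩ := h
  unfold Connected at hnc
  push_neg at hnc
  obtain ⟨u, hu, v, hv, huv⟩ := hnc
  have hne : u ≠ v := fun h => huv (h ▸ Relation.ReflTransGen.refl)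
  simp only [induce, Finset.mem_inter, Finset.mem_sdiff] at hu hv
  have h2 : ({u, v} : Finset ℕ) ⊆ G.verts \ X := by
    intro z hz
    rcases Finset.mem_insert.mp hz with rfl | hz
    · exact Finset.mem_sdiff.mpr ⟨hu.1, hu.2.2⟩
    · rw [Finset.mem_singleton] at hz; subst hz
      exact Finset.mem_sdiff.mpr ⟨hv.1, hv.2.2⟩
  have h3 := Finset.card_le_card h2
  rw [Finset.card_pair hne] at h3
  have h4 := Finset.card_sdiff_of_subset hXV
  have h5 := Finset.card_le_card hXV
  omega

lemma kappa_le_of_cut {G : FinHypergraph} {X : Finset ℕ} (h : G.IsVertexCut X) :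
    G.kappa ≤ X.card := by
  unfold kappa
  rw [if_pos ⟨X, h⟩]
  exact Nat.sInf_le ⟨X, h, rfl⟩

lemma kappa_le_pred (G : FinHypergraph) : G.kappa ≤ G.verts.card - 1 := by
  by_cases h : ∃ X, G.IsVertexCut X
  · obtain ⟨X, hX⟩ := h
    have h1 := cut_two_le hX
    have h2 := kappa_le_of_cut hX
    omega
  · unfold kappa; rw [if_neg h]

lemma kappaBar_bdd (G : FinHypergraph) :
    G.verts.card ∈ upperBounds {m | ∃ H' : FinHypergraph, H'.IsSub G ∧ H'.kappa = m} := by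
  rintro m ⟨H', hsub, rfl⟩
  have h1 := kappa_le_pred H'
  have h2 := Finset.card_le_card hsub.1
  omega

lemma le_kappaBar {G H' : FinHypergraph} (h : H'.IsSub G) : H'.kappa ≤ G.kappaBar := by
  unfold kappaBar
  exact le_csSup ⟨_, kappaBar_bdd G⟩ ⟨H', h, rfl⟩

lemma machine (H H' : FinHypergraph) (S : Finset ℕ) (u : ℕ) (e : Finset ℕ)
    (heV : e ⊆ H.verts) (hene : e.Nonempty)
    (hsub : H'.IsSub (H.addEdge e)) (he' : e ∈ H'.edges)
    (w : ℕ) (hw : w ∈ e)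
    (p q : ℕ) (hp : p ∈ H'.verts) (hpS : p ∉ S) (hpw : p ≠ w)
    (hq : q ∈ H'.verts) (hqS : q ∉ S) (hqw : q ≠ w)
    (hpA : Relation.ReflTransGen (H.induce (H.verts \ S)).Adj u p)
    (hqA : ¬ Relation.ReflTransGen (H.induce (H.verts \ S)).Adj u q) :
    H'.kappa ≤ S.card + 1 := by
  classical
  have hVsub : H'.verts ⊆ H.verts := by
    have h := hsub.1; simpa [addEdge] using h
  have hedz : H'.edges ⊆ insert e H.edges := by
    have h := hsub.2
    simp only [addEdge, if_pos (And.intro heV hene)] at h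
    exact h
  set X : Finset ℕ := (S ∪ {w}) ∩ H'.verts with hXdef
  have hwX : w ∈ X := Finset.mem_inter.mpr
    ⟨Finset.mem_union_right _ (Finset.mem_singleton_self w), H'.edge_sub e he' hw⟩
  have hcut : H'.IsVertexCut X := by
    refine ⟨Finset.inter_subset_right, ?_⟩
    intro hcon
    have hpmem : p ∈ (H'.induce (H'.verts \ X)).verts := by
      simp only [induce, Finset.mem_inter, Finset.mem_sdiff]
      refine ⟨hp, hp, ?_⟩
      intro hpX
      rcases Finset.mem_union.mp (Finset.mem_inter.mp hpX).1 with h | h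
      · exact hpS h
      · exact hpw (Finset.mem_singleton.mp h)
    have hqmem : q ∈ (H'.induce (H'.verts \ X)).verts := by
      simp only [induce, Finset.mem_inter, Finset.mem_sdiff]
      refine ⟨hq, hq, ?_⟩
      intro hqX
      rcases Finset.mem_union.mp (Finset.mem_inter.mp hqX).1 with h | h
      · exact hqS h
      · exact hqw (Finset.mem_singleton.mp h)
    have hreach := hcon p hpmem q hqmem
    have key : ∀ f ∈ (H'.induce (H'.verts \ X)).edges, ∀ x ∈ f, ∀ y ∈ f,
        Relation.ReflTransGen (H.induce (H.verts \ S)).Adj u x →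
        Relation.ReflTransGen (H.induce (H.verts \ S)).Adj u y := by
      intro f hf x hx y hy hux
      simp only [induce, Finset.mem_filter] at hf
      obtain ⟨hfE, hfsub⟩ := hf
      have hfne : f ≠ e := by
        rintro rfl
        exact (Finset.mem_sdiff.mp (hfsub hw)).2 hwX
      have hfH : f ∈ H.edges := by
        rcases Finset.mem_insert.mp (hedz hfE) with h | h
        · exact absurd h hfne
        · exact h
      have hfVS : f ⊆ H.verts \ S := by
        intro z hz
        have hz' := Finset.mem_sdiff.mp (hfsub hz)
        refine Finset.mem_sdiff.mpr ⟨hVsub hz'.1, ?_⟩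
        intro hzS
        exact hz'.2 (Finset.mem_inter.mpr ⟨Finset.mem_union_left _ hzS, hz'.1⟩)
      exact hux.tail ⟨f, Finset.mem_filter.mpr ⟨hfH, hfVS⟩, hx, hy⟩
    exact hqA (reach_pred _ _ key hreach hpA)
  calc H'.kappa ≤ X.card := kappa_le_of_cut hcut
    _ ≤ (S ∪ {w}).card := Finset.card_le_card Finset.inter_subset_left
    _ ≤ S.card + 1 := by
        have h := Finset.card_union_le S {w}
        simpa using h

end FinHypergraph


/-- If `H` is a vertex-`k`-maximal `r`-uniform hypergraph on
`n ≥ k + r - 1` vertices, then `κ̄(H) = κ(H) = k`. -/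

theorem stmt_2 (n k r : ℕ) (hk : 2 ≤ k) (hr : 2 ≤ r) (hn : k + r - 1 ≤ n)
    (H : FinHypergraph) (hcard : H.verts.card = n) (hH : H.VertexKMaximal r k) :
    H.kappaBar = k ∧ H.kappa = k := by
  classical
  obtain ⟨huni, hbar, hmax⟩ := hH
  have hklek : k ≤ H.kappa := by
    by_contra hlt
    push_neg at hlt
    by_cases hcut : ∃ X, H.IsVertexCut X
    · have hmem : H.kappa ∈ {m | ∃ X, H.IsVertexCut X ∧ X.card = m} := by
        unfold FinHypergraph.kappa
        rw [if_pos hcut]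
        apply Nat.sInf_mem
        obtain ⟨X, hX⟩ := hcut
        exact ⟨X.card, X, hX, rfl⟩
      obtain ⟨S, hScut, hScard⟩ := hmem
      obtain ⟨hSV, hdis⟩ := hScut
      unfold FinHypergraph.Connected at hdis; push_neg at hdis
      obtain ⟨u, hu, v, hv, huv⟩ := hdis
      simp only [FinHypergraph.induce, Finset.mem_inter, Finset.mem_sdiff] at hu hv
      have huV : u ∈ H.verts := hu.1
      have huS : u ∉ S := hu.2.2
      have hvV : v ∈ H.verts := hv.1
      have hvS : v ∉ S := hv.2.2
      have huvne : u ≠ v := by rintro rfl; exact huv Relation.ReflTransGen.refl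
      have hcardVS : r ≤ (H.verts \ S).card := by
        have h4 := Finset.card_sdiff_of_subset hSV
        have h5 := Finset.card_le_card hSV
        omega
      have hpair : ({u, v} : Finset ℕ) ⊆ H.verts \ S := by
        intro z hz
        rcases Finset.mem_insert.mp hz with rfl | hz
        · exact Finset.mem_sdiff.mpr ⟨huV, huS⟩
        · rw [Finset.mem_singleton] at hz; subst hz
          exact Finset.mem_sdiff.mpr ⟨hvV, hvS⟩
      have hpc : ({u, v} : Finset ℕ).card ≤ r := by
        rw [Finset.card_pair huvne]; omega
      obtain ⟨e, hue, heVS, hecard⟩ := Finset.exists_subsuperset_card_eq hpair hpc hcardVS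
      have hue1 : u ∈ e := hue (by simp)
      have hve1 : v ∈ e := hue (by simp)
      have heV : e ⊆ H.verts := heVS.trans Finset.sdiff_subset
      have hene : e.Nonempty := ⟨u, hue1⟩
      have henotedge : e ∉ H.edges := by
        intro hmm
        exact huv (Relation.ReflTransGen.single
          ⟨e, Finset.mem_filter.mpr ⟨hmm, heVS⟩, hue1, hve1⟩)
      have hkbig := hmax e heV hecard henotedge
      have hSSne : Set.Nonempty {m | ∃ H'' : FinHypergraph, H''.IsSub (H.addEdge e) ∧ H''.kappa = m} :=
        ⟨(H.addEdge e).kappa, H.addEdge e, ⟨Finset.Subset.refl _, Finset.Subset.refl _⟩, rfl⟩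
      have hSSmem := Nat.sSup_mem hSSne ⟨_, FinHypergraph.kappaBar_bdd (H.addEdge e)⟩
      rw [show sSup {m | ∃ H'' : FinHypergraph, H''.IsSub (H.addEdge e) ∧ H''.kappa = m}
          = (H.addEdge e).kappaBar from rfl] at hSSmem
      obtain ⟨H', hsub, hkap⟩ := hSSmem
      have hk1 : k + 1 ≤ H'.kappa := by rw [hkap]; exact hkbig
      have heH' : e ∈ H'.edges := by
        by_contra hne
        have hsubH : H'.IsSub H := by
          constructor
          · have h := hsub.1; simpa [FinHypergraph.addEdge] using h
          · intro f hf
            have h := hsub.2 hf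
            simp only [FinHypergraph.addEdge, if_pos (And.intro heV hene)] at h
            rcases Finset.mem_insert.mp h with rfl | h
            · exact absurd hf hne
            · exact h
        have h := FinHypergraph.le_kappaBar hsubH
        omega
      have huH' : u ∈ H'.verts := H'.edge_sub e heH' hue1
      have hvH' : v ∈ H'.verts := H'.edge_sub e heH' hve1
      by_cases hq : ∃ q ∈ H'.verts, q ∉ S ∧ q ≠ v ∧
          ¬ Relation.ReflTransGen (H.induce (H.verts \ S)).Adj u q
      · obtain ⟨q, hqV, hqS, hqv, hqA⟩ := hq
        have h := FinHypergraph.machine H H' S u e heV hene hsub heH' v hve1 u q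
          huH' huS huvne hqV hqS hqv Relation.ReflTransGen.refl hqA
        omega
      · push_neg at hq
        by_cases hp : ∃ p ∈ H'.verts, p ∉ S ∧ p ≠ u ∧
            Relation.ReflTransGen (H.induce (H.verts \ S)).Adj u p
        · obtain ⟨p, hpV, hpS, hpu, hpA⟩ := hp
          have h := FinHypergraph.machine H H' S u e heV hene hsub heH' u hue1 p v
            hpV hpS hpu hvH' hvS (Ne.symm huvne) hpA huv
          omega
        · push_neg at hp
          have hsmall : H'.verts ⊆ S ∪ {u, v} := by
            intro z hz
            by_cases hzS : z ∈ S
            · exact Finset.mem_union_left _ hzS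
            · by_cases hzA : Relation.ReflTransGen (H.induce (H.verts \ S)).Adj u z
              · have hz' : z = u := by
                  by_contra hne'
                  exact hp z hz hzS hne' hzA
                subst hz'; exact Finset.mem_union_right _ (by simp)
              · have hz' : z = v := by
                  by_contra hne'
                  exact hzA (hq z hz hzS hne')
                subst hz'; exact Finset.mem_union_right _ (by simp)
          have hc1 := Finset.card_le_card hsmall
          have hc2 := Finset.card_union_le S ({u, v} : Finset ℕ)
          have hc3 : ({u, v} : Finset ℕ).card = 2 := Finset.card_pair huvne
          have hc4 := FinHypergraph.kappa_le_pred H'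
          omega
    · have h : H.kappa = H.verts.card - 1 := by
        unfold FinHypergraph.kappa; rw [if_neg hcut]
      omega
  have hksmall : H.kappa ≤ H.kappaBar :=
    FinHypergraph.le_kappaBar ⟨Finset.Subset.refl _, Finset.Subset.refl _⟩
  have h1 : H.kappa = k := le_antisymm (le_trans hksmall hbar) hklek
  refine ⟨le_antisymm hbar ?_, h1⟩
  rw [← h1]
  exact hksmall
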